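/- Let x₀ ∈ ℝ, α > 1, and 0 < T* < (α − 1)/(α(1 + α|x₀|)). Define recursively the continuous functions g₀ ≡ 1 on [0,T*] and g_{n+1}(t) = 1 + ∫₀ᵗ g_n(s) ds − x₀ ∫₀ᵗ max_{η∈[0,s]} (g_n(η))² ds. Then for every n ∈ ℕ and every t ∈ [0,T*] one has |g_{n+1}(t) − g_n(t)| ≤ (|1 − x₀|/(1 + 2α|x₀|)) · (1 + 2α|x₀|)^{n+1} t^{n+1} / (n+1)!. -/

import Mathlib

open Set MeasureTheory intervalIntegral

theorem picard_iterates_cauchy_estimate (x₀ α T : ℝ) (hα : 1 < α)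
    (hT : 0 < T) (hT' : T < (α - 1) / (α * (1 + α * |x₀|)))
    (g : ℕ → ℝ → ℝ)
    (hgc : ∀ n, ContinuousOn (g n) (Set.Icc 0 T))
    (hg0 : ∀ t ∈ Set.Icc (0:ℝ) T, g 0 t = 1)
    (hgrec : ∀ n, ∀ t ∈ Set.Icc (0:ℝ) T, g (n + 1) t =
      1 + (∫ s in (0:ℝ)..t, g n s)
        - x₀ * ∫ s in (0:ℝ)..t, sSup ((fun η => (g n η) ^ 2) '' Set.Icc 0 s)) :
    ∀ n, ∀ t ∈ Set.Icc (0:ℝ) T, |g (n + 1) t - g n t| ≤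
      (|1 - x₀| / (1 + 2 * α * |x₀|)) * (1 + 2 * α * |x₀|) ^ (n + 1) * t ^ (n + 1)
        / (Nat.factorial (n + 1)) := by
  have hα0 : (0:ℝ) < α := lt_trans one_pos hα
  set A : ℝ := |x₀| with hAdef
  have hA0 : 0 ≤ A := abs_nonneg _
  set K : ℝ := 1 + 2 * α * A with hKdef
  have hK0 : (0:ℝ) < K := by positivity
  have hden : (0:ℝ) < α * (1 + α * A) := by positivity
  have hTb : T * (α * (1 + α * A)) < α - 1 := (lt_div_iff₀ hden).mp hT'
  set M : ℕ → ℝ → ℝ := fun n s => sSup ((fun η => (g n η) ^ 2) '' Set.Icc 0 s) with hMdef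
  -- basic facts about the sup
  have hsub : ∀ s ∈ Icc (0:ℝ) T, Icc (0:ℝ) s ⊆ Icc (0:ℝ) T :=
    fun s hs => Icc_subset_Icc le_rfl hs.2
  have hcomp : ∀ n, ∀ s ∈ Icc (0:ℝ) T, IsCompact ((fun η => (g n η) ^ 2) '' Icc 0 s) := by
    intro n s hs
    exact isCompact_Icc.image_of_continuousOn (((hgc n).mono (hsub s hs)).pow 2)
  have hne : ∀ n, ∀ s ∈ Icc (0:ℝ) T, ((fun η => (g n η) ^ 2) '' Icc (0:ℝ) s).Nonempty := by
    intro n s hs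
    exact ⟨_, mem_image_of_mem _ (left_mem_Icc.mpr hs.1)⟩
  have hMle : ∀ n, ∀ s ∈ Icc (0:ℝ) T, ∀ η ∈ Icc (0:ℝ) s, (g n η) ^ 2 ≤ M n s := by
    intro n s hs η hη
    exact le_csSup (hcomp n s hs).bddAbove (mem_image_of_mem _ hη)
  have hattain : ∀ n, ∀ s ∈ Icc (0:ℝ) T, ∃ η ∈ Icc (0:ℝ) s, M n s = (g n η) ^ 2 := by
    intro n s hs
    have := (hcomp n s hs).sSup_mem (hne n s hs)
    obtain ⟨η, hη, hηe⟩ := this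
    exact ⟨η, hη, hηe.symm⟩
  have hMnonneg : ∀ n, ∀ s ∈ Icc (0:ℝ) T, 0 ≤ M n s := by
    intro n s hs
    exact le_trans (sq_nonneg (g n 0)) (hMle n s hs 0 (left_mem_Icc.mpr hs.1))
  have hMmono : ∀ n, MonotoneOn (M n) (Icc (0:ℝ) T) := by
    intro n s hs s' hs' hss'
    exact csSup_le_csSup (hcomp n s' hs').bddAbove (hne n s hs)
      (image_mono (Icc_subset_Icc le_rfl hss'))
  -- integrability
  have hint : ∀ n, ∀ t ∈ Icc (0:ℝ) T, IntervalIntegrable (g n) volume 0 t := by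
    intro n t ht
    apply ContinuousOn.intervalIntegrable
    rw [uIcc_of_le ht.1]
    exact (hgc n).mono (hsub t ht)
  have hintM : ∀ n, ∀ t ∈ Icc (0:ℝ) T, IntervalIntegrable (M n) volume 0 t := by
    intro n t ht
    apply MonotoneOn.intervalIntegrable
    rw [uIcc_of_le ht.1]
    exact (hMmono n).mono (hsub t ht)
  -- uniform bound |g n| ≤ α
  have habs : ∀ n, ∀ t ∈ Icc (0:ℝ) T, |g n t| ≤ α := by
    intro n
    induction n with
    | zero => intro t ht; rw [hg0 t ht]; rw [abs_one]; linarith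
    | succ n ih =>
      intro t ht
      have hMb : ∀ s ∈ Icc (0:ℝ) T, M n s ≤ α ^ 2 := by
        intro s hs
        apply csSup_le (hne n s hs)
        rintro _ ⟨η, hη, rfl⟩
        calc (g n η) ^ 2 = |g n η| ^ 2 := (sq_abs _).symm
          _ ≤ α ^ 2 := by
            have := ih η (hsub s hs hη)
            nlinarith [abs_nonneg (g n η)]
      have h1 : |∫ s in (0:ℝ)..t, g n s| ≤ α * t := by
        have := intervalIntegral.norm_integral_le_of_norm_le_const
          (C := α) (f := g n) (a := 0) (b := t) ?_
        · rw [Real.norm_eq_abs] at this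
          calc |∫ s in (0:ℝ)..t, g n s| ≤ α * |t - 0| := this
            _ = α * t := by rw [sub_zero, abs_of_nonneg ht.1]
        · intro x hx
          rw [uIoc_of_le ht.1] at hx
          exact ih x ⟨le_of_lt hx.1, hx.2.trans ht.2⟩
      have h2 : |∫ s in (0:ℝ)..t, M n s| ≤ α ^ 2 * t := by
        have := intervalIntegral.norm_integral_le_of_norm_le_const
          (C := α ^ 2) (f := M n) (a := 0) (b := t) ?_
        · rw [Real.norm_eq_abs] at this
          calc |∫ s in (0:ℝ)..t, M n s| ≤ α ^ 2 * |t - 0| := this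
            _ = α ^ 2 * t := by rw [sub_zero, abs_of_nonneg ht.1]
        · intro x hx
          rw [uIoc_of_le ht.1] at hx
          have hxT : x ∈ Icc (0:ℝ) T := ⟨le_of_lt hx.1, hx.2.trans ht.2⟩
          rw [Real.norm_eq_abs, abs_of_nonneg (hMnonneg n x hxT)]
          exact hMb x hxT
      have hrec := hgrec n t ht
      have hax : |x₀ * ∫ s in (0:ℝ)..t, M n s| ≤ A * (α ^ 2 * t) := by
        rw [abs_mul]
        exact mul_le_mul_of_nonneg_left h2 hA0
      have hle : |g (n+1) t| ≤ 1 + α * t + A * (α ^ 2 * t) := by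
        rw [hrec]
        calc |1 + (∫ s in (0:ℝ)..t, g n s) - x₀ * ∫ s in (0:ℝ)..t, M n s|
            ≤ |1 + (∫ s in (0:ℝ)..t, g n s)| + |x₀ * ∫ s in (0:ℝ)..t, M n s| := abs_sub _ _
          _ ≤ 1 + |∫ s in (0:ℝ)..t, g n s| + |x₀ * ∫ s in (0:ℝ)..t, M n s| := by
              have := abs_add_le (1:ℝ) (∫ s in (0:ℝ)..t, g n s)
              simp only [abs_one] at this; linarith
          _ ≤ 1 + α * t + A * (α ^ 2 * t) := by linarith
      have htT : t * (α * (1 + α * A)) ≤ T * (α * (1 + α * A)) :=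
        mul_le_mul_of_nonneg_right ht.2 (le_of_lt hden)
      nlinarith
  -- the main induction
  have key : ∀ n, ∀ t ∈ Icc (0:ℝ) T, |g (n + 1) t - g n t| ≤
      |1 - x₀| * K ^ n * t ^ (n + 1) / (Nat.factorial (n + 1)) := by
    intro n
    induction n with
    | zero =>
      intro t ht
      have h1 : (∫ s in (0:ℝ)..t, g 0 s) = t := by
        rw [intervalIntegral.integral_congr (g := fun _ => (1:ℝ))]
        · simp
        · intro s hs
          rw [uIcc_of_le ht.1] at hs
          exact hg0 s (hsub t ht hs)
      have h2 : (∫ s in (0:ℝ)..t, M 0 s) = t := by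
        rw [intervalIntegral.integral_congr (g := fun _ => (1:ℝ))]
        · simp
        · intro s hs
          rw [uIcc_of_le ht.1] at hs
          have hsT : s ∈ Icc (0:ℝ) T := hsub t ht hs
          apply le_antisymm
          · apply csSup_le (hne 0 s hsT)
            rintro _ ⟨η, hη, rfl⟩
            show g 0 η ^ 2 ≤ (1:ℝ)
            rw [hg0 η (hsub s hsT hη)]; norm_num
          · have := hMle 0 s hsT 0 (left_mem_Icc.mpr hsT.1)
            rw [hg0 0 (left_mem_Icc.mpr (le_of_lt hT))] at this
            simpa using this
      rw [hgrec 0 t ht, hg0 t ht, h1, h2]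
      have : |1 + t - x₀ * t - 1| = |1 - x₀| * t := by
        rw [show (1:ℝ) + t - x₀ * t - 1 = (1 - x₀) * t by ring, abs_mul,
          abs_of_nonneg ht.1]
      rw [this]
      simp [Nat.factorial]
    | succ n ih =>
      intro t ht
      have heq : g (n + 2) t - g (n + 1) t =
          (∫ s in (0:ℝ)..t, (g (n+1) s - g n s))
            - x₀ * ∫ s in (0:ℝ)..t, (M (n+1) s - M n s) := by
        rw [hgrec (n+1) t ht, hgrec n t ht,
          intervalIntegral.integral_sub (hint (n+1) t ht) (hint n t ht),
          intervalIntegral.integral_sub (hintM (n+1) t ht) (hintM n t ht)]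
        ring
      set D : ℝ → ℝ := fun s => |1 - x₀| * K ^ n * s ^ (n+1) / (Nat.factorial (n+1)) with hDdef
      have hDc : Continuous D := by
        apply Continuous.div_const
        exact continuous_const.mul (continuous_pow _)
      have hDint : IntervalIntegrable D volume 0 t := hDc.intervalIntegrable _ _
      have hDmono : ∀ η s : ℝ, 0 ≤ η → η ≤ s → D η ≤ D s := by
        intro η s h0 hηs
        apply div_le_div_of_nonneg_right _ (by positivity)
        · exact mul_le_mul_of_nonneg_left (pow_le_pow_left₀ h0 hηs _) (by positivity)
      -- sup-difference bound
      have hMd : ∀ s ∈ Icc (0:ℝ) T, |M (n+1) s - M n s| ≤ 2 * α * D s := by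
        intro s hs
        have hsq : ∀ η ∈ Icc (0:ℝ) s, |(g (n+1) η) ^ 2 - (g n η) ^ 2| ≤ 2 * α * D s := by
          intro η hη
          have hηT : η ∈ Icc (0:ℝ) T := hsub s hs hη
          have hd : |g (n+1) η - g n η| ≤ D s :=
            (ih η hηT).trans (hDmono η s hη.1 hη.2)
          have habs1 := habs (n+1) η hηT
          have habs2 := habs n η hηT
          calc |(g (n+1) η) ^ 2 - (g n η) ^ 2|
              = |g (n+1) η + g n η| * |g (n+1) η - g n η| := by
                rw [← abs_mul]; ring_nf
            _ ≤ (2 * α) * D s := by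
                apply mul_le_mul _ hd (abs_nonneg _) (by positivity)
                calc |g (n+1) η + g n η| ≤ |g (n+1) η| + |g n η| := abs_add_le _ _
                  _ ≤ 2 * α := by linarith
        rw [abs_sub_le_iff]
        constructor
        · obtain ⟨η, hη, hηe⟩ := hattain (n+1) s hs
          have h1 := hsq η hη
          have h2 := hMle n s hs η hη
          have := abs_sub_le_iff.mp h1
          linarith [this.1, hηe ▸ le_refl (M (n+1) s)]
        · obtain ⟨η, hη, hηe⟩ := hattain n s hs
          have h1 := hsq η hη
          have h2 := hMle (n+1) s hs η hη
          have := abs_sub_le_iff.mp h1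
          linarith [this.2]
      -- integral bounds
      have hmem : ∀ x ∈ Set.uIoc (0:ℝ) t, x ∈ Icc (0:ℝ) T := by
        intro x hx
        rw [uIoc_of_le ht.1] at hx
        exact ⟨le_of_lt hx.1, hx.2.trans ht.2⟩
      have hDnn : ∀ x ∈ Icc (0:ℝ) t, 0 ≤ D x := by
        intro x hx
        exact div_nonneg (mul_nonneg (by positivity) (pow_nonneg hx.1 _)) (by positivity)
      have hDpos : 0 ≤ ∫ s in (0:ℝ)..t, D s :=
        intervalIntegral.integral_nonneg ht.1 hDnn
      have h2pos : 0 ≤ ∫ s in (0:ℝ)..t, 2 * α * D s :=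
        intervalIntegral.integral_nonneg ht.1
          (fun x hx => mul_nonneg (by positivity) (hDnn x hx))
      have h1 : |∫ s in (0:ℝ)..t, (g (n+1) s - g n s)| ≤ ∫ s in (0:ℝ)..t, D s := by
        have h := intervalIntegral.norm_integral_le_abs_of_norm_le
          (f := fun s => g (n+1) s - g n s) (g := D) (a := 0) (b := t) (μ := volume) ?_ hDint
        · rw [Real.norm_eq_abs, abs_of_nonneg hDpos] at h
          exact h
        · filter_upwards [ae_restrict_mem measurableSet_uIoc] with x hx
          simpa using ih x (hmem x hx)
      have h2 : |∫ s in (0:ℝ)..t, (M (n+1) s - M n s)| ≤ ∫ s in (0:ℝ)..t, 2 * α * D s := by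
        have h := intervalIntegral.norm_integral_le_abs_of_norm_le
          (f := fun s => M (n+1) s - M n s) (g := fun s => 2 * α * D s) (a := 0) (b := t)
          (μ := volume) ?_ ((continuous_const.mul hDc).intervalIntegrable _ _)
        · rw [Real.norm_eq_abs, abs_of_nonneg h2pos] at h
          exact h
        · filter_upwards [ae_restrict_mem measurableSet_uIoc] with x hx
          simpa using hMd x (hmem x hx)
      have hDval : (∫ s in (0:ℝ)..t, D s)
          = |1 - x₀| * K ^ n / (Nat.factorial (n+1)) * (t ^ (n+2) / (n+2)) := by
        have : ∀ s, D s = |1 - x₀| * K ^ n / (Nat.factorial (n+1)) * s ^ (n+1) := by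
          intro s; rw [hDdef]; ring
        simp only [this]
        rw [intervalIntegral.integral_const_mul, integral_pow]
        push_cast
        ring
      have h2' : (∫ s in (0:ℝ)..t, 2 * α * D s) = 2 * α * ∫ s in (0:ℝ)..t, D s := by
        rw [intervalIntegral.integral_const_mul]
      have hfinal : |g (n+2) t - g (n+1) t| ≤ K * ∫ s in (0:ℝ)..t, D s := by
        rw [heq]
        calc |(∫ s in (0:ℝ)..t, (g (n+1) s - g n s))
              - x₀ * ∫ s in (0:ℝ)..t, (M (n+1) s - M n s)|
            ≤ |∫ s in (0:ℝ)..t, (g (n+1) s - g n s)|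
              + |x₀| * |∫ s in (0:ℝ)..t, (M (n+1) s - M n s)| := by
              rw [← abs_mul]; exact abs_sub _ _
          _ ≤ (∫ s in (0:ℝ)..t, D s) + A * (2 * α * ∫ s in (0:ℝ)..t, D s) := by
              rw [← h2']
              exact add_le_add h1 (mul_le_mul_of_nonneg_left h2 hA0)
          _ = K * ∫ s in (0:ℝ)..t, D s := by rw [hKdef]; ring
      refine hfinal.trans ?_
      rw [hDval]
      have hfact : (Nat.factorial (n+2) : ℝ) = (n+2) * Nat.factorial (n+1) := by
        rw [Nat.factorial_succ]; push_cast; ring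
      have hfpos : (0:ℝ) < Nat.factorial (n+1) := by positivity
      rw [show n + 1 + 1 = n + 2 from rfl]
      rw [hfact]
      rw [pow_succ]
      apply le_of_eq
      field_simp
      ring
  intro n t ht
  have h := key n t ht
  have hEq : (|1 - x₀| / K) * K ^ (n+1) * t ^ (n+1) / (Nat.factorial (n+1))
      = |1 - x₀| * K ^ n * t ^ (n+1) / (Nat.factorial (n+1)) := by
    rw [pow_succ]
    field_simp
  rw [hEq]
  exact h
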